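/- Let X be a real normed space, p ∈ (0,1), q > 0, and suppose that for all nonzero x, y ∈ X: α_p[x,y] ≤ 2^{1/q}·‖x−y‖/(‖x‖^{(1−p)q} + ‖y‖^{(1−p)q})^{1/q}. Then for all x, y ∈ X with ‖x‖ = ‖y‖ and all nonzero real γ, ‖x+y‖ ≤ ‖γx + γ⁻¹y‖. -/

import Mathlib

theorem key_step_thm5 {X : Type*} [NormedAddCommGroup X] [NormedSpace ℝ X]
    (p q : ℝ) (hp : p ∈ Set.Ioo (0:ℝ) 1) (hq : 0 < q)
    (h : ∀ x y : X, x ≠ 0 → y ≠ 0 →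
      ‖(‖x‖ ^ (p - 1)) • x - (‖y‖ ^ (p - 1)) • y‖ ≤
        2 ^ (1 / q) * ‖x - y‖ / (‖x‖ ^ ((1 - p) * q) + ‖y‖ ^ ((1 - p) * q)) ^ (1 / q)) :
    ∀ x y : X, ‖x‖ = ‖y‖ → ∀ γ : ℝ, γ ≠ 0 → ‖x + y‖ ≤ ‖γ • x + γ⁻¹ • y‖ := by
  obtain ⟨hp0, hp1⟩ := hp
  intro x y hxy γ hγ
  rcases eq_or_ne x 0 with hx | hx
  · have hy : y = 0 := by
      rw [← norm_eq_zero, ← hxy, hx, norm_zero]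
    simp [hx, hy]
  have hy : y ≠ 0 := by
    rw [← norm_ne_zero_iff, ← hxy, norm_ne_zero_iff]; exact hx
  have hX : (0:ℝ) < ‖x‖ := norm_pos_iff.mpr hx
  have hq' : q ≠ 0 := hq.ne'
  -- Key inequality
  have key : ∀ c : ℝ, 0 < c →
      ‖(c ^ p) • x + (c ^ (-p)) • y‖ ≤ ‖c • x + c⁻¹ • y‖ := by
    intro c hc
    have hc' : (0:ℝ) < c⁻¹ := inv_pos.mpr hc
    have hxn : c • x ≠ 0 := smul_ne_zero hc.ne' hx
    have hyn : -(c⁻¹ • y) ≠ 0 := by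
      simpa using smul_ne_zero hc'.ne' hy
    have H := h (c • x) (-(c⁻¹ • y)) hxn hyn
    have nxs : ‖c • x‖ = c * ‖x‖ := by
      rw [norm_smul, Real.norm_of_nonneg hc.le]
    have nys : ‖-(c⁻¹ • y)‖ = c⁻¹ * ‖x‖ := by
      rw [norm_neg, norm_smul, Real.norm_of_nonneg hc'.le, hxy]
    rw [nxs, nys] at H
    -- rewrite left side
    have e1 : ((c * ‖x‖) ^ (p - 1)) • (c • x) = (‖x‖ ^ (p - 1)) • ((c ^ p) • x) := by
      rw [smul_smul, smul_smul]
      congr 1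
      rw [Real.mul_rpow hc.le hX.le,
        show c ^ (p-1) * ‖x‖ ^ (p-1) * c = ‖x‖ ^ (p-1) * (c ^ (p-1) * c ^ (1:ℝ)) by
          rw [Real.rpow_one]; ring,
        ← Real.rpow_add hc, show p - 1 + 1 = p by ring]
    have e2 : ((c⁻¹ * ‖x‖) ^ (p - 1)) • (-(c⁻¹ • y)) = -((‖x‖ ^ (p - 1)) • ((c ^ (-p)) • y)) := by
      rw [smul_neg, smul_smul, smul_smul]
      congr 2
      rw [Real.mul_rpow hc'.le hX.le, Real.inv_rpow hc.le, ← Real.rpow_neg hc.le,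
        show c⁻¹ = c ^ (-1:ℝ) by rw [Real.rpow_neg_one],
        show c ^ (-(p-1)) * ‖x‖ ^ (p-1) * c ^ (-1:ℝ) = ‖x‖ ^ (p-1) * (c ^ (-(p-1)) * c ^ (-1:ℝ)) by ring,
        ← Real.rpow_add hc, show -(p-1) + -1 = -p by ring]
    rw [e1, e2, sub_neg_eq_add, ← smul_add, norm_smul,
      Real.norm_of_nonneg (Real.rpow_nonneg hX.le _)] at H
    have hsub : c • x - -(c⁻¹ • y) = c • x + c⁻¹ • y := by
      rw [sub_neg_eq_add]
    rw [hsub] at H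
    set N := ‖c • x + c⁻¹ • y‖ with hN
    have hNnn : 0 ≤ N := norm_nonneg _
    have denom_ge : 2 * ‖x‖ ^ ((1-p)*q) ≤ (c*‖x‖) ^ ((1-p)*q) + (c⁻¹*‖x‖) ^ ((1-p)*q) := by
      rw [Real.mul_rpow hc.le hX.le, Real.mul_rpow hc'.le hX.le,
        Real.inv_rpow hc.le]
      have ht : 0 < c ^ ((1-p)*q) := Real.rpow_pos_of_pos hc _
      have h2 : 2 ≤ c ^ ((1-p)*q) + (c ^ ((1-p)*q))⁻¹ := by
        nlinarith [sq_nonneg (c ^ ((1-p)*q) - 1), mul_inv_cancel₀ ht.ne',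
          inv_pos.mpr ht]
      nlinarith [Real.rpow_nonneg hX.le ((1-p)*q)]
    have denom_pos : (0:ℝ) < 2 * ‖x‖ ^ ((1-p)*q) := by positivity
    have hd2 : (2 * ‖x‖ ^ ((1-p)*q)) ^ (1/q)
        ≤ ((c*‖x‖) ^ ((1-p)*q) + (c⁻¹*‖x‖) ^ ((1-p)*q)) ^ (1/q) :=
      Real.rpow_le_rpow denom_pos.le denom_ge (by positivity)
    have hd2pos : (0:ℝ) < (2 * ‖x‖ ^ ((1-p)*q)) ^ (1/q) :=
      Real.rpow_pos_of_pos denom_pos _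
    have step1 : 2 ^ (1/q) * N / ((c*‖x‖) ^ ((1-p)*q) + (c⁻¹*‖x‖) ^ ((1-p)*q)) ^ (1/q)
        ≤ 2 ^ (1/q) * N / (2 * ‖x‖ ^ ((1-p)*q)) ^ (1/q) := by
      gcongr
    have step2 : 2 ^ (1/q) * N / (2 * ‖x‖ ^ ((1-p)*q)) ^ (1/q) = N * ‖x‖ ^ (p - 1) := by
      have hA : ((2:ℝ) * ‖x‖ ^ ((1-p)*q)) ^ (1/q) = 2 ^ (1/q) * ‖x‖ ^ (1-p) := by
        rw [Real.mul_rpow (by norm_num) (Real.rpow_nonneg hX.le _),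
          ← Real.rpow_mul hX.le]
        congr 1
        field_simp
      have h2q : (0:ℝ) < (2:ℝ) ^ (1/q) := by positivity
      have hxppos : (0:ℝ) < ‖x‖ ^ (1-p) := Real.rpow_pos_of_pos hX _
      rw [hA, show p - 1 = -(1-p) by ring, Real.rpow_neg hX.le]
      field_simp
    have H2 : ‖x‖ ^ (p-1) * ‖(c ^ p) • x + (c ^ (-p)) • y‖ ≤ N * ‖x‖ ^ (p-1) :=
      le_trans H (le_trans step1 (le_of_eq step2))
    have hxp : (0:ℝ) < ‖x‖ ^ (p-1) := Real.rpow_pos_of_pos hX _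
    nlinarith [hxp, H2]
  -- reduce to positive γ
  set c := |γ| with hcdef
  have hc : 0 < c := abs_pos.mpr hγ
  have hnorm_eq : ‖γ • x + γ⁻¹ • y‖ = ‖c • x + c⁻¹ • y‖ := by
    rcases hγ.lt_or_gt with hlt | hgt
    · rw [hcdef, abs_of_neg hlt, show (-γ)⁻¹ = -γ⁻¹ by rw [inv_neg],
        neg_smul, neg_smul, ← neg_add, norm_neg]
    · rw [hcdef, abs_of_pos hgt]
  rw [hnorm_eq]
  -- iterate
  set b : ℕ → ℝ := fun n => c ^ (p ^ n : ℝ) with hb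
  have hbpos : ∀ n, 0 < b n := fun n => Real.rpow_pos_of_pos hc _
  have hbound : ∀ n, ‖(b n) • x + (b n)⁻¹ • y‖ ≤ ‖c • x + c⁻¹ • y‖ := by
    intro n
    induction n with
    | zero => simp [hb]
    | succ n ih =>
      have h1 := key (b n) (hbpos n)
      have e3 : (b n) ^ p = b (n+1) := by
        show (c ^ (p ^ n : ℝ)) ^ p = c ^ (p ^ (n+1) : ℝ)
        rw [← Real.rpow_mul hc.le, ← pow_succ]
      have e4 : (b n) ^ (-p) = (b (n+1))⁻¹ := by
        rw [Real.rpow_neg (hbpos n).le, e3]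
      rw [e3, e4] at h1
      exact le_trans h1 ih
  -- limit
  have hlim : Filter.Tendsto b Filter.atTop (nhds 1) := by
    have h1 : Filter.Tendsto (fun n => (p ^ n : ℝ)) Filter.atTop (nhds 0) :=
      tendsto_pow_atTop_nhds_zero_of_lt_one hp0.le hp1
    have h2 : Filter.Tendsto (fun t : ℝ => c ^ t) (nhds 0) (nhds (c ^ (0:ℝ))) :=
      (Real.continuousAt_const_rpow hc.ne')
    simpa [hb, Real.rpow_zero, Function.comp_def] using h2.comp h1
  have hlim2 : Filter.Tendsto (fun n => ‖(b n) • x + (b n)⁻¹ • y‖) Filter.atTop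
      (nhds ‖x + y‖) := by
    have hinv : Filter.Tendsto (fun n => (b n)⁻¹) Filter.atTop (nhds 1) := by
      simpa using hlim.inv₀ one_ne_zero
    have := ((hlim.smul_const x).add (hinv.smul_const y)).norm
    simpa using this
  exact le_of_tendsto hlim2 (Filter.Eventually.of_forall hbound)
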